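/- Let θ be a categorical distribution on a finite nonempty set X, let α ≠ 0, n ≥ 1 and ε > 0. Then the cardinality of the tilted weakly typical set of order α satisfies (1 − V(T(θ,α)||θ)/(n·ε²))·exp(n·H(T(θ,α)) − n·|α|·ε) ≤ |A^n_{θ,α,ε}| < exp(n·H(T(θ,α)) + n·|α|·ε). -/

import Mathlib

open Real BigOperators
open scoped Classical

variable {X : Type*}

/-- A categorical distribution on a finite set: positive everywhere and sums to 1. -/
def IsCatDist [Fintype X] (θ : X → ℝ) : Prop :=
  (∀ x, 0 < θ x) ∧ ∑ x, θ x = 1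

/-- The tilt of order `α` of a categorical distribution. -/
noncomputable def tilt [Fintype X] (θ : X → ℝ) (α : ℝ) : X → ℝ :=
  fun x => θ x ^ α / ∑ y, θ y ^ α

/-- Shannon entropy (natural log). -/
noncomputable def shannonEntropy [Fintype X] (ρ : X → ℝ) : ℝ :=
  ∑ x, ρ x * Real.log (1 / ρ x)

/-- Cross entropy `H(ρ‖θ)`. -/
noncomputable def crossEntropy [Fintype X] (ρ θ : X → ℝ) : ℝ :=
  ∑ x, ρ x * Real.log (1 / θ x)

/-- Relative entropy (KL divergence) `D(ρ‖θ)`. -/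
noncomputable def relEntropy [Fintype X] (ρ θ : X → ℝ) : ℝ :=
  ∑ x, ρ x * Real.log (ρ x / θ x)

/-- Rényi entropy of order `α`. -/
noncomputable def renyiEntropy [Fintype X] (θ : X → ℝ) (α : ℝ) : ℝ :=
  (1 / (1 - α)) * Real.log (∑ x, θ x ^ α)

/-- Varentropy. -/
noncomputable def varentropy [Fintype X] (ρ : X → ℝ) : ℝ :=
  ∑ x, ρ x * (Real.log (1 / ρ x) - shannonEntropy ρ) ^ 2

/-- Cross varentropy. -/
noncomputable def crossVarentropy [Fintype X] (ρ θ : X → ℝ) : ℝ :=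
  ∑ x, ρ x * (Real.log (1 / θ x) - crossEntropy ρ θ) ^ 2

/-- Probability of an `n`-string under the i.i.d. extension of `θ`. -/
noncomputable def strProb (θ : X → ℝ) {n : ℕ} (x : Fin n → X) : ℝ := ∏ i, θ (x i)

/-- Probability of a set of `n`-strings. -/
noncomputable def setProb [Fintype X] (θ : X → ℝ) {n : ℕ} (S : Finset (Fin n → X)) : ℝ :=
  ∑ x ∈ S, strProb θ x

/-- `θ` has a unique maximizer and a unique minimizer. -/
def UniqueExtremizers [Fintype X] (θ : X → ℝ) : Prop :=
  (∃! x : X, ∀ y, θ y ≤ θ x) ∧ (∃! x : X, ∀ y, θ x ≤ θ y)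

/-- Tilted weakly typical set of order `α`. -/
noncomputable def typicalSetA [Fintype X] (θ : X → ℝ) (α : ℝ) (n : ℕ) (ε : ℝ) :
    Finset (Fin n → X) :=
  Finset.univ.filter (fun x =>
    Real.exp (-(n : ℝ) * crossEntropy (tilt θ α) θ - n * ε) < strProb θ x ∧
    strProb θ x < Real.exp (-(n : ℝ) * crossEntropy (tilt θ α) θ + n * ε))

/-- The set `D^n_{θ,α,ε}`. -/
noncomputable def setD [Fintype X] (θ : X → ℝ) (α : ℝ) (n : ℕ) (ε : ℝ) :
    Finset (Fin n → X) :=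
  Finset.univ.filter (fun x =>
    strProb (tilt θ α) x > Real.exp (-(n : ℝ) * shannonEntropy (tilt θ α) - n * |α| * ε))

/-- The set `E^n_{θ,α,ε}`. -/
noncomputable def setE [Fintype X] (θ : X → ℝ) (α : ℝ) (n : ℕ) (ε : ℝ) :
    Finset (Fin n → X) :=
  Finset.univ.filter (fun x =>
    strProb (tilt θ α) x < Real.exp (-(n : ℝ) * shannonEntropy (tilt θ α) + n * |α| * ε))

/-- A guesswork function for `θ` on `n`-strings: a bijection onto `{1,…,|X|^n}`
that orders strings from most likely to least likely. -/
def IsGuesswork [Fintype X] (θ : X → ℝ) {n : ℕ} (G : (Fin n → X) → ℕ) : Prop :=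
  Function.Injective G ∧
  (∀ x, G x ∈ Finset.Icc 1 (Fintype.card X ^ n)) ∧
  (∀ m ∈ Finset.Icc 1 (Fintype.card X ^ n), ∃ x, G x = m) ∧
  (∀ x y, strProb θ x > strProb θ y → G x < G y)

section CardHelpers
set_option linter.unusedSectionVars false
variable {X : Type*} [Fintype X]


lemma sum_pi_cons {n : ℕ} (F : (Fin (n+1) → X) → ℝ) :
    ∑ x : Fin (n+1) → X, F x = ∑ a : X, ∑ y : Fin n → X, F (Fin.cons a y) := by
  calc ∑ x : Fin (n+1) → X, F x
      = ∑ p : X × (Fin n → X), F (Fin.cons p.1 p.2) :=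
        (Fintype.sum_equiv (Fin.consEquiv (fun _ => X))
          (fun p => F (Fin.cons p.1 p.2)) F (fun p => rfl)).symm
    _ = ∑ a : X, ∑ y : Fin n → X, F (Fin.cons a y) := Fintype.sum_prod_type _

lemma prod_cons_eval {n : ℕ} (ρ : X → ℝ) (a : X) (y : Fin n → X) :
    ∏ i, ρ ((Fin.cons a y : Fin (n+1) → X) i) = ρ a * ∏ i, ρ (y i) := by
  rw [Fin.prod_univ_succ]; simp

lemma sum_cons_eval {n : ℕ} (d : X → ℝ) (a : X) (y : Fin n → X) :
    ∑ i, d ((Fin.cons a y : Fin (n+1) → X) i) = d a + ∑ i, d (y i) := by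
  rw [Fin.sum_univ_succ]; simp

lemma prod_sum_one (ρ : X → ℝ) (h1 : ∑ a, ρ a = 1) :
    ∀ n : ℕ, ∑ x : Fin n → X, ∏ i, ρ (x i) = 1
  | 0 => by simp
  | (n+1) => by
    rw [sum_pi_cons]
    simp_rw [prod_cons_eval, ← Finset.mul_sum, prod_sum_one ρ h1 n, mul_one]
    exact h1

lemma variance_sum (ρ d : X → ℝ) (h1 : ∑ a, ρ a = 1) (h0 : ∑ a, ρ a * d a = 0) :
    ∀ n : ℕ, ∑ x : Fin n → X, (∏ i, ρ (x i)) * (∑ i, d (x i)) ^ 2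
      = n * ∑ a, ρ a * d a ^ 2
  | 0 => by simp
  | (n+1) => by
    rw [sum_pi_cons]
    have expand : ∀ (a : X) (y : Fin n → X),
        (∏ i, ρ ((Fin.cons a y : Fin (n+1) → X) i)) *
          (∑ i, d ((Fin.cons a y : Fin (n+1) → X) i)) ^ 2
        = (ρ a * d a ^ 2) * (∏ i, ρ (y i))
          + (2 * (ρ a * d a)) * ((∏ i, ρ (y i)) * (∑ i, d (y i)))
          + ρ a * ((∏ i, ρ (y i)) * (∑ i, d (y i)) ^ 2) := by
      intro a y
      rw [prod_cons_eval, sum_cons_eval]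
      ring
    simp_rw [expand, Finset.sum_add_distrib, ← Finset.mul_sum, prod_sum_one ρ h1 n,
      variance_sum ρ d h1 h0 n, mul_one]
    have h2 : ∑ a : X, 2 * (ρ a * d a) = 0 := by
      rw [← Finset.mul_sum, h0, mul_zero]
    rw [← Finset.sum_mul, ← Finset.sum_mul, h2, h1]
    push_cast
    ring

end CardHelpers

theorem tilted_typical_set_card_bounds [Fintype X] [Nonempty X] (θ : X → ℝ)
    (hθ : IsCatDist θ) (α : ℝ) (hα : α ≠ 0) (n : ℕ) (hn : 1 ≤ n)
    (ε : ℝ) (hε : 0 < ε) :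
    (1 - crossVarentropy (tilt θ α) θ / (n * ε ^ 2)) *
        Real.exp ((n : ℝ) * shannonEntropy (tilt θ α) - n * |α| * ε) ≤
      ((typicalSetA θ α n ε).card : ℝ) ∧
    ((typicalSetA θ α n ε).card : ℝ) <
      Real.exp ((n : ℝ) * shannonEntropy (tilt θ α) + n * |α| * ε) := by
  obtain ⟨hθp, hθs⟩ := hθ
  set Z : ℝ := ∑ y, θ y ^ α with hZdef
  have hZ : 0 < Z := Finset.sum_pos (fun y _ => Real.rpow_pos_of_pos (hθp y) α) Finset.univ_nonempty
  set t : X → ℝ := tilt θ α with htdef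
  have ht_pos : ∀ a, 0 < t a := fun a => div_pos (Real.rpow_pos_of_pos (hθp a) α) hZ
  have ht_sum : ∑ a, t a = 1 := by
    rw [htdef]; unfold tilt; rw [← Finset.sum_div, div_self hZ.ne']
  set Hc : ℝ := crossEntropy t θ with hHcdef
  set H : ℝ := shannonEntropy t with hHdef
  have hlogt : ∀ a, Real.log (1 / t a) = α * Real.log (1 / θ a) + Real.log Z := by
    intro a
    rw [one_div, Real.log_inv, one_div, Real.log_inv]
    show -Real.log (θ a ^ α / Z) = α * -Real.log (θ a) + Real.log Z
    rw [Real.log_div (Real.rpow_pos_of_pos (hθp a) α).ne' hZ.ne', Real.log_rpow (hθp a)]; ring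
  have hH : H = α * Hc + Real.log Z := by
    have e1 : H = ∑ a, (α * (t a * Real.log (1 / θ a)) + t a * Real.log Z) := by
      rw [hHdef]; unfold shannonEntropy
      exact Finset.sum_congr rfl (fun a _ => by rw [hlogt a]; ring)
    rw [e1, Finset.sum_add_distrib, ← Finset.mul_sum, ← Finset.sum_mul, ht_sum, one_mul]
    rfl
  have strθpos : ∀ x : Fin n → X, 0 < strProb θ x :=
    fun x => Finset.prod_pos (fun i _ => hθp (x i))
  have strtpos : ∀ x : Fin n → X, 0 < strProb t x :=
    fun x => Finset.prod_pos (fun i _ => ht_pos (x i))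
  have hstr : ∀ x : Fin n → X, strProb t x = strProb θ x ^ α / Z ^ n := by
    intro x
    unfold strProb
    rw [htdef]; unfold tilt
    rw [Finset.prod_div_distrib, Finset.prod_const, Finset.card_univ, Fintype.card_fin,
      ← Real.finset_prod_rpow _ _ (fun i _ => (hθp (x i)).le)]
  have hlogstr : ∀ x : Fin n → X,
      Real.log (strProb t x) = α * Real.log (strProb θ x) - n * Real.log Z := by
    intro x
    rw [hstr x, Real.log_div (Real.rpow_pos_of_pos (strθpos x) α).ne' (pow_pos hZ n).ne',
      Real.log_rpow (strθpos x), Real.log_pow]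
  -- membership characterization
  have hmem : ∀ x : Fin n → X,
      x ∈ typicalSetA θ α n ε ↔ |Real.log (strProb θ x) + n * Hc| < n * ε := by
    intro x
    unfold typicalSetA
    rw [Finset.mem_filter]
    simp only [Finset.mem_univ, true_and]
    rw [abs_lt, ← Real.lt_log_iff_exp_lt (strθpos x), ← Real.log_lt_iff_lt_exp (strθpos x),
      ← hHcdef]
    constructor
    · rintro ⟨h1, h2⟩; exact ⟨by linarith, by linarith⟩
    · rintro ⟨h1, h2⟩; exact ⟨by linarith, by linarith⟩
  -- per-element tilt bounds on the typical set
  have hper : ∀ x ∈ typicalSetA θ α n ε,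
      Real.exp (-(n : ℝ) * H - n * |α| * ε) < strProb t x ∧
      strProb t x < Real.exp (-(n : ℝ) * H + n * |α| * ε) := by
    intro x hx
    have hb := (hmem x).mp hx
    have habs : |Real.log (strProb t x) + n * H| = |α| * |Real.log (strProb θ x) + n * Hc| := by
      rw [hlogstr x, hH, ← abs_mul]
      congr 1
      ring
    have hlt : |Real.log (strProb t x) + n * H| < n * |α| * ε := by
      rw [habs]
      calc |α| * |Real.log (strProb θ x) + n * Hc| < |α| * (n * ε) :=
            mul_lt_mul_of_pos_left hb (abs_pos.mpr hα)
        _ = n * |α| * ε := by ring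
      
    obtain ⟨hl, hr⟩ := abs_lt.mp hlt
    constructor
    · have : Real.exp (-(n : ℝ) * H - n * |α| * ε) < Real.exp (Real.log (strProb t x)) :=
        Real.exp_lt_exp.mpr (by linarith)
      rwa [Real.exp_log (strtpos x)] at this
    · have : Real.exp (Real.log (strProb t x)) < Real.exp (-(n : ℝ) * H + n * |α| * ε) :=
        Real.exp_lt_exp.mpr (by linarith)
      rwa [Real.exp_log (strtpos x)] at this
  have htotal : ∑ x : Fin n → X, strProb t x = 1 := prod_sum_one t ht_sum n
  set A := typicalSetA θ α n ε with hAdef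
  have hAsum_le : ∑ x ∈ A, strProb t x ≤ 1 := by
    rw [← htotal]
    exact Finset.sum_le_sum_of_subset_of_nonneg (Finset.subset_univ A)
      (fun x _ _ => (strtpos x).le)
  -- Chebyshev part
  set d : X → ℝ := fun a => Real.log (1 / θ a) - Hc with hddef
  have hd0 : ∑ a, t a * d a = 0 := by
    rw [hddef]
    simp only [mul_sub]
    rw [Finset.sum_sub_distrib, ← Finset.sum_mul, ht_sum, one_mul, hHcdef]
    unfold crossEntropy
    ring
  have hVc : crossVarentropy t θ = ∑ a, t a * d a ^ 2 := rfl
  have hvar : ∑ x : Fin n → X, strProb t x * (∑ i, d (x i)) ^ 2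
      = n * crossVarentropy t θ := by
    rw [hVc]
    exact variance_sum t d ht_sum hd0 n
  have hsumD : ∀ x : Fin n → X, ∑ i, d (x i) = -(Real.log (strProb θ x) + n * Hc) := by
    intro x
    rw [hddef]
    simp only
    rw [Finset.sum_sub_distrib, Finset.sum_const, Finset.card_univ, Fintype.card_fin]
    have : ∑ i, Real.log (1 / θ (x i)) = -Real.log (strProb θ x) := by
      unfold strProb
      rw [Real.log_prod (fun i _ => (hθp (x i)).ne')]
      rw [← Finset.sum_neg_distrib]
      exact Finset.sum_congr rfl (fun i _ => by rw [one_div, Real.log_inv])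
    rw [this]
    push_cast
    ring
  have hcheb : ∑ x ∈ Finset.univ.filter (fun x : Fin n → X => x ∉ A), strProb t x
      ≤ crossVarentropy t θ / (n * ε ^ 2) := by
    have hn0 : (0 : ℝ) < n := by exact_mod_cast hn
    have key : ∀ x : Fin n → X, x ∉ A →
        strProb t x ≤ strProb t x * (∑ i, d (x i)) ^ 2 / (n * ε) ^ 2 := by
      intro x hx
      have hge : n * ε ≤ |∑ i, d (x i)| := by
        rw [hsumD x, abs_neg]
        by_contra hcon
        push_neg at hcon
        exact hx ((hmem x).mpr hcon)
      have hsq : (n * ε) ^ 2 ≤ (∑ i, d (x i)) ^ 2 := by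
        rw [← sq_abs (∑ i, d (x i))]
        exact pow_le_pow_left₀ (by positivity) hge 2
      rw [le_div_iff₀ (by positivity)]
      exact mul_le_mul_of_nonneg_left hsq (strtpos x).le
    calc ∑ x ∈ Finset.univ.filter (fun x : Fin n → X => x ∉ A), strProb t x
        ≤ ∑ x ∈ Finset.univ.filter (fun x : Fin n → X => x ∉ A),
            strProb t x * (∑ i, d (x i)) ^ 2 / (n * ε) ^ 2 :=
          Finset.sum_le_sum (fun x hx => key x (Finset.mem_filter.mp hx).2)
      _ ≤ ∑ x : Fin n → X, strProb t x * (∑ i, d (x i)) ^ 2 / (n * ε) ^ 2 :=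
          Finset.sum_le_sum_of_subset_of_nonneg (Finset.subset_univ _)
            (fun x _ _ => div_nonneg (mul_nonneg (strtpos x).le (sq_nonneg _)) (sq_nonneg _))
      _ = (∑ x : Fin n → X, strProb t x * (∑ i, d (x i)) ^ 2) / (n * ε) ^ 2 := by
          rw [Finset.sum_div]
      _ = (n * crossVarentropy t θ) / (n * ε) ^ 2 := by rw [hvar]
      _ = crossVarentropy t θ / (n * ε ^ 2) := by
          field_simp
  have hAlow : 1 - crossVarentropy t θ / (n * ε ^ 2) ≤ ∑ x ∈ A, strProb t x := by
    have hsplit := Finset.sum_filter_add_sum_filter_not Finset.univ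
      (fun x : Fin n → X => x ∈ A) (strProb t)
    have hAfilter : Finset.univ.filter (fun x : Fin n → X => x ∈ A) = A := by
      ext x; simp [hAdef]
    rw [hAfilter, htotal] at hsplit
    linarith [hcheb]
  constructor
  · -- lower bound
    have hub : ∑ x ∈ A, strProb t x ≤ (A.card : ℝ) * Real.exp (-(n : ℝ) * H + n * |α| * ε) := by
      have := Finset.sum_le_card_nsmul A (strProb t)
        (Real.exp (-(n : ℝ) * H + n * |α| * ε)) (fun x hx => ((hper x hx).2).le)
      rwa [nsmul_eq_mul] at this
    have h1 : 1 - crossVarentropy t θ / (n * ε ^ 2)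
        ≤ (A.card : ℝ) * Real.exp (-(n : ℝ) * H + n * |α| * ε) := le_trans hAlow hub
    have h2 := mul_le_mul_of_nonneg_right h1 (Real.exp_pos ((n : ℝ) * H - n * |α| * ε)).le
    have h3 : (A.card : ℝ) * Real.exp (-(n : ℝ) * H + n * |α| * ε) *
        Real.exp ((n : ℝ) * H - n * |α| * ε) = (A.card : ℝ) := by
      rw [mul_assoc, ← Real.exp_add,
        show (-(n : ℝ) * H + n * |α| * ε) + ((n : ℝ) * H - n * |α| * ε) = 0 by ring,
        Real.exp_zero, mul_one]
    rw [h3] at h2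
    exact h2
  · -- upper bound
    rcases A.eq_empty_or_nonempty with hA | hA
    · rw [hA]
      simp [Real.exp_pos]
    · have h1 : (A.card : ℝ) * Real.exp (-(n : ℝ) * H - n * |α| * ε) < ∑ x ∈ A, strProb t x := by
        have := Finset.sum_lt_sum_of_nonempty hA
          (f := fun _ => Real.exp (-(n : ℝ) * H - n * |α| * ε)) (g := strProb t)
          (fun x hx => (hper x hx).1)
        rwa [Finset.sum_const, nsmul_eq_mul] at this
      have h2 : (A.card : ℝ) * Real.exp (-(n : ℝ) * H - n * |α| * ε) < 1 := lt_of_lt_of_le h1 hAsum_le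
      have h3 := mul_lt_mul_of_pos_right h2 (Real.exp_pos ((n : ℝ) * H + n * |α| * ε))
      rw [mul_assoc, ← Real.exp_add,
        show (-(n : ℝ) * H - n * |α| * ε) + ((n : ℝ) * H + n * |α| * ε) = 0 by ring,
        Real.exp_zero, mul_one, one_mul] at h3
      exact h3
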